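/- Let α generate F_{64}^× and let Ψ : F_{64}^× → C^× be a character (viewing F_{64} as a degree-3 extension of F_4). If Ψ(α) + Ψ(α^4) + Ψ(α^{16}) = 0, then Ψ has order 9. -/
import Mathlib


/-- Let `α` be a generator of `𝔽₆₄ˣ` and `Ψ : 𝔽₆₄ˣ → ℂˣ` a character.
If `Ψ(α) + Ψ(α^4) + Ψ(α^16) = 0` then `Ψ` has order 9. -/
theorem stmt_7 (α : (GaloisField 2 6)ˣ) (hα : orderOf α = 63)
    (Ψ : (GaloisField 2 6)ˣ →* ℂˣ)
    (h : ((Ψ α : ℂ) + (Ψ (α ^ 4) : ℂ) + (Ψ (α ^ 16) : ℂ)) = 0) :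
    orderOf Ψ = 9 := by
  set z : ℂ := (Ψ α : ℂ) with hzdef
  have hz0 : z ≠ 0 := (Ψ α).ne_zero
  -- z^63 = 1
  have hα63 : α ^ 63 = 1 := by rw [← hα]; exact pow_orderOf_eq_one α
  have h63 : z ^ 63 = 1 := by
    have : (Ψ α) ^ 63 = 1 := by rw [← map_pow, hα63, map_one]
    simpa [hzdef] using congrArg (Units.val) this
  -- rewrite h
  have hz : z + z ^ 4 + z ^ 16 = 0 := by
    have h4 : (Ψ (α ^ 4) : ℂ) = z ^ 4 := by rw [map_pow]; simp [hzdef]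
    have h16 : (Ψ (α ^ 16) : ℂ) = z ^ 16 := by rw [map_pow]; simp [hzdef]
    rw [h4, h16] at h; exact h
  have hw5 : 1 + z ^ 3 + z ^ 15 = 0 := by
    have hm : z * (1 + z ^ 3 + z ^ 15) = 0 := by ring_nf; linear_combination hz
    exact (mul_eq_zero.mp hm).resolve_left hz0
  have hfac : (z ^ 6 + z ^ 3 + 1) * (z ^ 9 - z ^ 6 + 1) = 0 := by
    linear_combination hw5
  have key : z ^ 9 = 1 ∧ z ^ 3 ≠ 1 := by
    rcases mul_eq_zero.mp hfac with hA | hB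
    · constructor
      · linear_combination (z ^ 3 - 1) * hA
      · intro h3
        have : (3 : ℂ) = 0 := by linear_combination hA - (z ^ 3 + 2) * h3
        norm_num at this
    · exfalso
      have : (1 : ℂ) = 0 := by
        linear_combination ((57/98) + (51/98)*z^3 + (25/98)*z^6 + (-3/49)*z^9 +
          (-13/49)*z^12 + (-31/98)*z^15 + (-10/49)*z^18 + (-5/98)*z^21 + (11/98)*z^24 +
          (15/98)*z^27 + (8/49)*z^30 + (2/49)*z^33 + (1/98)*z^36 + (-6/49)*z^39 +
          (-3/98)*z^42 + (-13/98)*z^45 + (9/98)*z^48 + (-5/49)*z^51 + (11/49)*z^54 +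
          (-19/98)*z^57 + (16/49)*z^60) * hB +
          ((-41/98) + (51/98)*z^3 + (-16/49)*z^6) * h63
      exact one_ne_zero this
  -- orderOf (Ψ α) = 9 in ℂˣ
  have hordz : orderOf (Ψ α) = 9 := by
    rw [← orderOf_units]
    have : (3 : ℕ) ^ 2 = 9 := by norm_num
    rw [← this]
    exact orderOf_eq_prime_pow (by simpa using key.2) (by simpa using key.1)
  -- α generates the unit group
  have hcard : Nat.card (GaloisField 2 6)ˣ = 63 := by
    have h1 : Nat.card (GaloisField 2 6) = 64 := by
      have := GaloisField.card 2 6 (by norm_num)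
      simpa using this
    have h2 : Nat.card (GaloisField 2 6)ˣ = Nat.card (GaloisField 2 6) - 1 := by
      haveI : Fintype (GaloisField 2 6) := Fintype.ofFinite _
      haveI : DecidableEq (GaloisField 2 6) := Classical.decEq _
      rw [Nat.card_eq_fintype_card, Nat.card_eq_fintype_card, Fintype.card_units]
    rw [h2, h1]
  have hgen : ∀ x : (GaloisField 2 6)ˣ, x ∈ Subgroup.zpowers α := by
    have htop : Subgroup.zpowers α = ⊤ := by
      apply Subgroup.eq_top_of_card_eq
      rw [Nat.card_zpowers, hα, hcard]
    intro x; rw [htop]; trivial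
  -- orderOf Ψ = orderOf (Ψ α)
  have : orderOf Ψ = orderOf (Ψ α) := by
    rw [orderOf_eq_orderOf_iff]
    intro n
    constructor
    · intro hn
      have := congrArg (fun f : (GaloisField 2 6)ˣ →* ℂˣ => f α) hn
      simpa using this
    · intro hn
      ext x
      obtain ⟨k, rfl⟩ := hgen x
      have h1 : (Ψ ^ n) (α ^ k) = ((Ψ ^ n) α) ^ k := map_zpow _ _ _
      have h2 : (Ψ ^ n) α = (Ψ α) ^ n := rfl
      rw [h1, h2, hn]
      simp
  rw [this, hordz]
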